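/- Let A_h > A_ℓ > 0 and φ > 0 be real numbers, and set p̂ := (A_h − 2A_ℓ)/(A_h − A_ℓ). The function p ↦ λ(p) is strictly increasing on the set {p ∈ [0,1] : p < p̂} and strictly decreasing on the set {p ∈ [0,1] : p > p̂}. -/

import Mathlib

/-- λ is strictly increasing on {p ∈ [0,1] : p < p̂} and strictly decreasing on
{p ∈ [0,1] : p > p̂}. -/
theorem stmt_2 (Ah Al φ : ℝ) (hAl : 0 < Al) (hAh : Al < Ah) (hφ : 0 < φ)
    (lam : ℝ → ℝ)
    (hlam : ∀ p, lam p =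
      (φ / (2 * Ah ^ 2)) *
        (Real.sqrt ((1 - p) * Al) + Real.sqrt (p * Ah + (1 - p) * Al)) ^ 2)
    (phat : ℝ) (hphat : phat = (Ah - 2 * Al) / (Ah - Al)) :
    StrictMonoOn lam {p ∈ Set.Icc (0 : ℝ) 1 | p < phat} ∧
    StrictAntiOn lam {p ∈ Set.Icc (0 : ℝ) 1 | phat < p} := by
  have hfun : lam = fun p => (φ / (2 * Ah ^ 2)) *
      (Real.sqrt ((1 - p) * Al) + Real.sqrt (p * Ah + (1 - p) * Al)) ^ 2 := funext hlam
  subst hfun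
  subst hphat
  have hAh0 : 0 < Ah := hAl.trans hAh
  have hD : 0 < Ah - Al := sub_pos.mpr hAh
  have hc : 0 < φ / (2 * Ah ^ 2) := by positivity
  have hcont : Continuous (fun p : ℝ => (φ / (2 * Ah ^ 2)) *
      (Real.sqrt ((1 - p) * Al) + Real.sqrt (p * Ah + (1 - p) * Al)) ^ 2) := by
    fun_prop
  -- derivative on (0,1)
  have hderiv : ∀ x ∈ Set.Ioo (0:ℝ) 1,
      HasDerivAt (fun p : ℝ => (φ / (2 * Ah ^ 2)) *
        (Real.sqrt ((1 - p) * Al) + Real.sqrt (p * Ah + (1 - p) * Al)) ^ 2)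
        ((φ / (2 * Ah ^ 2)) * (2 *
          (Real.sqrt ((1 - x) * Al) + Real.sqrt (x * Ah + (1 - x) * Al)) *
          (-Al / (2 * Real.sqrt ((1 - x) * Al)) +
            (Ah - Al) / (2 * Real.sqrt (x * Ah + (1 - x) * Al))))) x := by
    rintro x ⟨hx0, hx1⟩
    have hu : 0 < (1 - x) * Al := by nlinarith
    have hv : 0 < x * Ah + (1 - x) * Al := by nlinarith
    have h1 : HasDerivAt (fun p : ℝ => (1 - p) * Al) (-Al) x := by
      simpa using ((hasDerivAt_id x).const_sub 1).mul_const Al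
    have h2 : HasDerivAt (fun p : ℝ => p * Ah + (1 - p) * Al) (Ah - Al) x := by
      have := ((hasDerivAt_id x).mul_const Ah).add (((hasDerivAt_id x).const_sub 1).mul_const Al)
      exact this.congr_deriv (by ring)
    have hsu : HasDerivAt (fun p : ℝ => Real.sqrt ((1 - p) * Al))
        (-Al / (2 * Real.sqrt ((1 - x) * Al))) x := by
      have := (Real.hasDerivAt_sqrt (ne_of_gt hu)).comp x h1
      exact this.congr_deriv (by field_simp)
    have hsv : HasDerivAt (fun p : ℝ => Real.sqrt (p * Ah + (1 - p) * Al))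
        ((Ah - Al) / (2 * Real.sqrt (x * Ah + (1 - x) * Al))) x := by
      have := (Real.hasDerivAt_sqrt (ne_of_gt hv)).comp x h2
      exact this.congr_deriv (by field_simp)
    have hf := (hsu.add hsv).pow 2
    have := hf.const_mul (φ / (2 * Ah ^ 2))
    exact this.congr_deriv (by simp only [Pi.add_apply]; ring)
  -- sign of the derivative value
  have hsignpos : ∀ x ∈ Set.Ioo (0:ℝ) 1, x * (Ah - Al) < Ah - 2 * Al →
      0 < (φ / (2 * Ah ^ 2)) * (2 *
          (Real.sqrt ((1 - x) * Al) + Real.sqrt (x * Ah + (1 - x) * Al)) *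
          (-Al / (2 * Real.sqrt ((1 - x) * Al)) +
            (Ah - Al) / (2 * Real.sqrt (x * Ah + (1 - x) * Al)))) := by
    rintro x ⟨hx0, hx1⟩ hlt
    have hu : 0 < (1 - x) * Al := by nlinarith
    have hv : 0 < x * Ah + (1 - x) * Al := by nlinarith
    have hsu : 0 < Real.sqrt ((1 - x) * Al) := Real.sqrt_pos.mpr hu
    have hsv : 0 < Real.sqrt (x * Ah + (1 - x) * Al) := Real.sqrt_pos.mpr hv
    have hsu2 : Real.sqrt ((1 - x) * Al) ^ 2 = (1 - x) * Al := Real.sq_sqrt hu.le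
    have hsv2 : Real.sqrt (x * Ah + (1 - x) * Al) ^ 2 = x * Ah + (1 - x) * Al :=
      Real.sq_sqrt hv.le
    have hsq : (Al * Real.sqrt (x * Ah + (1 - x) * Al)) ^ 2 <
        ((Ah - Al) * Real.sqrt ((1 - x) * Al)) ^ 2 := by
      have key : Al ^ 2 * (x * Ah + (1 - x) * Al) < (Ah - Al) ^ 2 * ((1 - x) * Al) := by
        nlinarith [mul_pos (mul_pos hAl hAh0) (sub_pos.mpr hlt)]
      calc (Al * Real.sqrt (x * Ah + (1 - x) * Al)) ^ 2
          = Al ^ 2 * (x * Ah + (1 - x) * Al) := by rw [mul_pow, hsv2]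
        _ < (Ah - Al) ^ 2 * ((1 - x) * Al) := key
        _ = ((Ah - Al) * Real.sqrt ((1 - x) * Al)) ^ 2 := by rw [mul_pow, hsu2]
    have hlt' : Al * Real.sqrt (x * Ah + (1 - x) * Al) <
        (Ah - Al) * Real.sqrt ((1 - x) * Al) :=
      lt_of_pow_lt_pow_left₀ 2 (by positivity) hsq
    have heq : -Al / (2 * Real.sqrt ((1 - x) * Al)) +
        (Ah - Al) / (2 * Real.sqrt (x * Ah + (1 - x) * Al)) =
        ((Ah - Al) * Real.sqrt ((1 - x) * Al) - Al * Real.sqrt (x * Ah + (1 - x) * Al)) /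
          (2 * Real.sqrt ((1 - x) * Al) * Real.sqrt (x * Ah + (1 - x) * Al)) := by
      have h1 : Real.sqrt ((1 - x) * Al) ≠ 0 := hsu.ne'
      have h2 : Real.sqrt (x * Ah + (1 - x) * Al) ≠ 0 := hsv.ne'
      set a := Real.sqrt ((1 - x) * Al)
      set b := Real.sqrt (x * Ah + (1 - x) * Al)
      field_simp
      ring
    rw [heq]
    have h1 : 0 < ((Ah - Al) * Real.sqrt ((1 - x) * Al) -
        Al * Real.sqrt (x * Ah + (1 - x) * Al)) /
          (2 * Real.sqrt ((1 - x) * Al) * Real.sqrt (x * Ah + (1 - x) * Al)) :=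
      div_pos (sub_pos.mpr hlt') (by positivity)
    positivity
  have hsignneg : ∀ x ∈ Set.Ioo (0:ℝ) 1, Ah - 2 * Al < x * (Ah - Al) →
      (φ / (2 * Ah ^ 2)) * (2 *
          (Real.sqrt ((1 - x) * Al) + Real.sqrt (x * Ah + (1 - x) * Al)) *
          (-Al / (2 * Real.sqrt ((1 - x) * Al)) +
            (Ah - Al) / (2 * Real.sqrt (x * Ah + (1 - x) * Al)))) < 0 := by
    rintro x ⟨hx0, hx1⟩ hlt
    have hu : 0 < (1 - x) * Al := by nlinarith
    have hv : 0 < x * Ah + (1 - x) * Al := by nlinarith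
    have hsu : 0 < Real.sqrt ((1 - x) * Al) := Real.sqrt_pos.mpr hu
    have hsv : 0 < Real.sqrt (x * Ah + (1 - x) * Al) := Real.sqrt_pos.mpr hv
    have hsu2 : Real.sqrt ((1 - x) * Al) ^ 2 = (1 - x) * Al := Real.sq_sqrt hu.le
    have hsv2 : Real.sqrt (x * Ah + (1 - x) * Al) ^ 2 = x * Ah + (1 - x) * Al :=
      Real.sq_sqrt hv.le
    have hsq : ((Ah - Al) * Real.sqrt ((1 - x) * Al)) ^ 2 <
        (Al * Real.sqrt (x * Ah + (1 - x) * Al)) ^ 2 := by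
      have key : (Ah - Al) ^ 2 * ((1 - x) * Al) < Al ^ 2 * (x * Ah + (1 - x) * Al) := by
        nlinarith [mul_pos (mul_pos hAl hAh0) (sub_pos.mpr hlt)]
      calc ((Ah - Al) * Real.sqrt ((1 - x) * Al)) ^ 2
          = (Ah - Al) ^ 2 * ((1 - x) * Al) := by rw [mul_pow, hsu2]
        _ < Al ^ 2 * (x * Ah + (1 - x) * Al) := key
        _ = (Al * Real.sqrt (x * Ah + (1 - x) * Al)) ^ 2 := by rw [mul_pow, hsv2]
    have hlt' : (Ah - Al) * Real.sqrt ((1 - x) * Al) <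
        Al * Real.sqrt (x * Ah + (1 - x) * Al) :=
      lt_of_pow_lt_pow_left₀ 2 (by positivity) hsq
    have heq : -Al / (2 * Real.sqrt ((1 - x) * Al)) +
        (Ah - Al) / (2 * Real.sqrt (x * Ah + (1 - x) * Al)) =
        ((Ah - Al) * Real.sqrt ((1 - x) * Al) - Al * Real.sqrt (x * Ah + (1 - x) * Al)) /
          (2 * Real.sqrt ((1 - x) * Al) * Real.sqrt (x * Ah + (1 - x) * Al)) := by
      have h1 : Real.sqrt ((1 - x) * Al) ≠ 0 := hsu.ne'
      have h2 : Real.sqrt (x * Ah + (1 - x) * Al) ≠ 0 := hsv.ne'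
      set a := Real.sqrt ((1 - x) * Al)
      set b := Real.sqrt (x * Ah + (1 - x) * Al)
      field_simp
      ring
    rw [heq]
    have h1 : ((Ah - Al) * Real.sqrt ((1 - x) * Al) -
        Al * Real.sqrt (x * Ah + (1 - x) * Al)) /
          (2 * Real.sqrt ((1 - x) * Al) * Real.sqrt (x * Ah + (1 - x) * Al)) < 0 :=
      div_neg_of_neg_of_pos (sub_neg.mpr hlt') (by positivity)
    have h2 : 0 < 2 * (Real.sqrt ((1 - x) * Al) + Real.sqrt (x * Ah + (1 - x) * Al)) := by
      positivity
    exact mul_neg_of_pos_of_neg hc (mul_neg_of_pos_of_neg h2 h1)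
  constructor
  · have hSeq : {p ∈ Set.Icc (0 : ℝ) 1 | p < (Ah - 2 * Al) / (Ah - Al)} =
        Set.Icc (0:ℝ) 1 ∩ Set.Iio ((Ah - 2 * Al) / (Ah - Al)) := rfl
    rw [hSeq]
    apply strictMonoOn_of_deriv_pos ((convex_Icc 0 1).inter (convex_Iio _))
      hcont.continuousOn
    intro x hx
    rw [interior_inter, interior_Icc, interior_Iio] at hx
    obtain ⟨hx1, hx2⟩ := hx
    have hxlt : x * (Ah - Al) < Ah - 2 * Al := (lt_div_iff₀ hD).mp hx2
    rw [(hderiv x hx1).deriv]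
    exact hsignpos x hx1 hxlt
  · have hSeq : {p ∈ Set.Icc (0 : ℝ) 1 | (Ah - 2 * Al) / (Ah - Al) < p} =
        Set.Icc (0:ℝ) 1 ∩ Set.Ioi ((Ah - 2 * Al) / (Ah - Al)) := rfl
    rw [hSeq]
    apply strictAntiOn_of_deriv_neg ((convex_Icc 0 1).inter (convex_Ioi _))
      hcont.continuousOn
    intro x hx
    rw [interior_inter, interior_Icc, interior_Ioi] at hx
    obtain ⟨hx1, hx2⟩ := hx
    have hxlt : Ah - 2 * Al < x * (Ah - Al) := (div_lt_iff₀ hD).mp hx2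
    rw [(hderiv x hx1).deriv]
    exact hsignneg x hx1 hxlt
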